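/- Let n, r be natural numbers with r ≥ 1, and write n = a(r+1) + b with 0 ≤ b ≤ r. If G is a simple graph on n vertices with maximum degree Δ(G) ≤ r, then the number of cliques of G satisfies k(G) ≤ k(aK_{r+1} ∪ K_b) = a(2^{r+1} − 1) + 2^b. -/

import Mathlib

open Classical Finset

namespace Paper

variable {V : Type*}

/-- The number of cliques (vertex sets inducing complete subgraphs, including
the empty set and singletons) of a graph. -/
noncomputable def cliqueCount [Fintype V] (G : SimpleGraph V) : ℕ :=
  (Finset.univ.filter fun s : Finset V => G.IsClique (s : Set V)).card

/-- The number of cliques of size `t`. -/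
noncomputable def cliqueCountSize [Fintype V] (G : SimpleGraph V) (t : ℕ) : ℕ :=
  (Finset.univ.filter fun s : Finset V => G.IsClique (s : Set V) ∧ s.card = t).card

/-- A finset of vertices is independent if its vertices are pairwise nonadjacent. -/
def IsIndepFinset (G : SimpleGraph V) (s : Finset V) : Prop :=
  (s : Set V).Pairwise fun u v => ¬ G.Adj u v

/-- The number of independent sets (including the empty set) of a graph. -/
noncomputable def indepCount [Fintype V] (G : SimpleGraph V) : ℕ :=
  (Finset.univ.filter fun s : Finset V => IsIndepFinset G s).card

/-- The number of independent sets of size `t`. -/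
noncomputable def indepCountSize [Fintype V] (G : SimpleGraph V) (t : ℕ) : ℕ :=
  (Finset.univ.filter fun s : Finset V => IsIndepFinset G s ∧ s.card = t).card

/-- `S_T`: the set of common neighbors of all vertices of `T`. -/
noncomputable def commonNbrs [Fintype V] (G : SimpleGraph V) (T : Finset V) : Finset V :=
  Finset.univ.filter fun v => ∀ x ∈ T, G.Adj x v

/-- The weight `w(C)` of a clique: the number of common neighbors of its vertices. -/
noncomputable def weight [Fintype V] (G : SimpleGraph V) (T : Finset V) : ℕ :=
  (commonNbrs G T).card

/-- A clique `T` is tight (for max degree bound `r`) if `w(T) = r + 1 - |T|`. -/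
def IsTight [Fintype V] (r : ℕ) (G : SimpleGraph V) (T : Finset V) : Prop :=
  G.IsClique (T : Set V) ∧ weight G T + T.card = r + 1

/-- A cluster is a maximal tight clique. -/
def IsCluster [Fintype V] (r : ℕ) (G : SimpleGraph V) (T : Finset V) : Prop :=
  IsTight r G T ∧ ∀ T' : Finset V, T ⊆ T' → IsTight r G T' → T' = T

/-- The graph `G_T`, obtained from `G` by adding all edges within `S_T` and deleting all
edges between `S_T` and `V(G) \ (T ∪ S_T)`. -/
noncomputable def modGraph [Fintype V] (G : SimpleGraph V) (T : Finset V) : SimpleGraph V :=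
  SimpleGraph.fromRel fun u v =>
    (u ∈ commonNbrs G T ∧ v ∈ commonNbrs G T) ∨
    (G.Adj u v ∧ ¬(u ∈ commonNbrs G T ∧ v ∉ T ∪ commonNbrs G T) ∧
      ¬(v ∈ commonNbrs G T ∧ u ∉ T ∪ commonNbrs G T))

/-- The graph `R_T`: the complement of the subgraph of `G` induced on `S_T`. -/
noncomputable def RT [Fintype V] (G : SimpleGraph V) (T : Finset V) :
    SimpleGraph ((commonNbrs G T : Finset V) : Set V) :=
  (SimpleGraph.induce ((commonNbrs G T : Finset V) : Set V) G)ᶜ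

/-- `δ_I`: the minimum degree in `R` over the vertices of `I`. -/
noncomputable def minDegOn {W : Type*} [Fintype W] (R : SimpleGraph W) (I : Finset W) : ℕ :=
  sInf ((fun x => R.degree x) '' (I : Set W))

/-- The fixed loss `φ(R) = Σ_{∅ ≠ I independent} (2 ^ δ_I - 1)`. -/
noncomputable def fixedLoss {W : Type*} [Fintype W] (R : SimpleGraph W) : ℕ :=
  ∑ I ∈ Finset.univ.filter (fun I : Finset W => I.Nonempty ∧ IsIndepFinset R I),
    (2 ^ minDegOn R I - 1)

/-- The disjoint union of `a` copies of `K_{r+1}` together with one copy of `K_b`. -/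
noncomputable def kUnion (a r b : ℕ) : SimpleGraph ((Fin a × Fin (r + 1)) ⊕ Fin b) :=
  SimpleGraph.fromRel fun x y =>
    match x, y with
    | Sum.inl (i, _), Sum.inl (j, _) => i = j
    | Sum.inr _, Sum.inr _ => True
    | _, _ => False

/-- The disjoint union of `a` copies of `K_3` together with one copy of the cycle `C_m`. -/
noncomputable def triCyc (a m : ℕ) : SimpleGraph ((Fin a × Fin 3) ⊕ Fin m) :=
  SimpleGraph.fromRel fun x y =>
    match x, y with
    | Sum.inl (i, _), Sum.inl (j, _) => i = j
    | Sum.inr u, Sum.inr v => (u.val + 1) % m = v.val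
    | _, _ => False

end Paper

open Paper

def fb (r n : ℕ) : ℕ := (n / (r+1)) * (2^(r+1) - 1) + 2^(n % (r+1))




lemma fb_val (r a b : ℕ) (hb : b ≤ r) : fb r (a * (r+1) + b) = a * (2^(r+1) - 1) + 2^b := by
  unfold fb
  have h1 : (a*(r+1)+b) / (r+1) = a := by
    rw [Nat.add_comm, Nat.add_mul_div_right _ _ (by omega : 0 < r+1), Nat.div_eq_of_lt (by omega)]
    omega
  have h2 : (a*(r+1)+b) % (r+1) = b := by
    rw [Nat.add_comm, Nat.add_mul_mod_self_right, Nat.mod_eq_of_lt (by omega)]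
  rw [h1, h2]

lemma pow_endpoint (j s : ℕ) (h : j ≤ s) : 2^j + 2^(s-j) ≤ 2^s + 1 := by
  have e : 2^j * 2^(s-j) = 2^s := by rw [← pow_add]; congr 1; omega
  have h2 : 1 ≤ 2^j := Nat.one_le_two_pow
  have h3 : 1 ≤ 2^(s-j) := Nat.one_le_two_pow
  nlinarith [e, h2, h3]

lemma fb_diff (r n j : ℕ) (h1 : 1 ≤ j) (h2 : j ≤ r + 1) (h3 : j ≤ n) :
    fb r (n - j) + (2^j - 1) ≤ fb r n := by
  obtain ⟨q, s, hs, rfl⟩ : ∃ q s, s < r + 1 ∧ n = q * (r+1) + s :=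
    ⟨n / (r+1), n % (r+1), Nat.mod_lt _ (Nat.succ_pos r), (Nat.div_add_mod' n (r+1)).symm⟩
  have hfb : fb r (q * (r+1) + s) = q * (2^(r+1) - 1) + 2^s := fb_val r q s (by omega)
  rcases le_or_gt j s with hj | hj
  · have he : q * (r+1) + s - j = q * (r+1) + (s - j) := by omega
    rw [he, hfb, fb_val r q (s-j) (by omega)]
    have := pow_endpoint j s hj
    have h2j : 1 ≤ 2^j := Nat.one_le_two_pow
    have h2sj : 2^(s-j) ≤ 2^s := Nat.pow_le_pow_right (by norm_num) (by omega)
    omega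
  · have hq : 1 ≤ q := by
      by_contra h
      have : q = 0 := by omega
      subst this; simp at h3; omega
    have heq : q * (r+1) + s - j = (q-1) * (r+1) + (s + (r+1) - j) := by
      have h5 : q * (r+1) = (q-1) * (r+1) + (r+1) := by
        cases q with
        | zero => omega
        | succ q' => simp [Nat.succ_mul]
      omega
    rw [heq, hfb, fb_val r (q-1) (s + (r+1) - j) (by omega)]
    set c := s + (r+1) - j with hc
    have key : 2^c + 2^j ≤ 2^(r+1) + 2^s := by
      have e1 : 2^(c-s) + 2^((r+1-s)-(c-s)) ≤ 2^(r+1-s) + 1 := pow_endpoint (c-s) (r+1-s) (by omega)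
      have e2 : 2^s * (2^(c-s) + 2^((r+1-s)-(c-s))) ≤ 2^s * (2^(r+1-s) + 1) :=
        Nat.mul_le_mul_left _ e1
      have ha : 2^s * 2^(c-s) = 2^c := by rw [← pow_add]; congr 1; omega
      have hb2 : 2^s * 2^((r+1-s)-(c-s)) = 2^j := by rw [← pow_add]; congr 1; omega
      have hcc : 2^s * 2^(r+1-s) = 2^(r+1) := by rw [← pow_add]; congr 1; omega
      rw [Nat.mul_add, ha, hb2, Nat.mul_add, hcc, Nat.mul_one] at e2
      have : 2^s ≥ 1 := Nat.one_le_two_pow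
      omega
    have hle : (2:ℕ)^(r+1) ≥ 2 := by
      calc (2:ℕ)^(r+1) ≥ 2^1 := Nat.pow_le_pow_right (by norm_num) (by omega)
           _ = 2 := by norm_num
    have hq1 : (q-1) * (2^(r+1) - 1) + (2^(r+1) - 1) = q * (2^(r+1)-1) := by
      cases q with
      | zero => omega
      | succ q' => simp [Nat.succ_mul]
    have h2j : 1 ≤ 2^j := Nat.one_le_two_pow
    have h2s : 1 ≤ 2^s := Nat.one_le_two_pow
    omega



open Classical Finset

namespace Aux

variable {V : Type*} [Fintype V]

/-- closed neighborhood as a finset -/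
noncomputable def cnb (G : SimpleGraph V) (v : V) : Finset V :=
  univ.filter fun x => x = v ∨ G.Adj v x

lemma mem_cnb {G : SimpleGraph V} {v x : V} : x ∈ cnb G v ↔ x = v ∨ G.Adj v x := by
  simp [cnb]

lemma self_mem_cnb {G : SimpleGraph V} (v : V) : v ∈ cnb G v := mem_cnb.2 (Or.inl rfl)

lemma clique_subset_cnb {G : SimpleGraph V} {C : Finset V} (h : G.IsClique (C : Set V))
    {w : V} (hw : w ∈ C) : C ⊆ cnb G w := by
  intro x hx
  rcases eq_or_ne x w with rfl | hne
  · exact self_mem_cnb x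
  · exact mem_cnb.2 (Or.inr (h (Finset.mem_coe.2 hw) (Finset.mem_coe.2 hx) hne.symm))

/-- number of nonempty cliques meeting the closed neighborhood of v -/
noncomputable def Acount (G : SimpleGraph V) (v : V) : ℕ :=
  (univ.filter fun C : Finset V => G.IsClique (C : Set V) ∧ (C ∩ cnb G v).Nonempty).card

/-- if v ∉ C for a clique C with part outside cnb v -/
lemma not_mem_of_sdiff {G : SimpleGraph V} {v : V} {C : Finset V} (h : G.IsClique (C : Set V))
    (hD : (C \ cnb G v).Nonempty) : v ∉ C := by
  intro hv
  obtain ⟨d, hd⟩ := hD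
  rw [mem_sdiff] at hd
  have hdv : d ≠ v := fun he => hd.2 (by rw [he]; exact self_mem_cnb v)
  exact hd.2 (mem_cnb.2 (Or.inr (h (Finset.mem_coe.2 hv) (Finset.mem_coe.2 hd.1) (Ne.symm hdv))))

/-- The key structural lemma for injectivity: if two distinct "type ii/iii" sources have the
same augmented set M, then each difference-set is the singleton of the other vertex. -/
lemma key_ne {G : SimpleGraph V} {v1 v2 : V} {C1 C2 : Finset V}
    (h1 : G.IsClique (C1 : Set V)) (h2 : G.IsClique (C2 : Set V))
    (hv1 : v1 ∉ C1) (hv2 : v2 ∉ C2)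
    (hD1 : (C1 \ cnb G v1).Nonempty)
    (hM : insert v1 C1 = insert v2 C2) (hne : v1 ≠ v2) :
    C1 \ cnb G v1 = {v2} := by
  have hv2C1 : v2 ∈ C1 := by
    have h : v2 ∈ insert v1 C1 := by rw [hM]; exact mem_insert_self v2 C2
    rcases mem_insert.1 h with h | h
    · exact absurd h hne.symm
    · exact h
  have hv1C2 : v1 ∈ C2 := by
    have h : v1 ∈ insert v2 C2 := by rw [← hM]; exact mem_insert_self v1 C1
    rcases mem_insert.1 h with h | h
    · exact absurd h hne
    · exact h
  have step : ∀ d ∈ C1 \ cnb G v1, d ≠ v2 → False := by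
    intro d hd hdv2
    rw [mem_sdiff] at hd
    have hdC2 : d ∈ C2 := by
      have h : d ∈ insert v2 C2 := by rw [← hM]; exact mem_insert_of_mem hd.1
      rcases mem_insert.1 h with h | h
      · exact absurd h hdv2
      · exact h
    have hdv1 : d ≠ v1 := fun he => hv1 (he ▸ hd.1)
    have : G.Adj v1 d := h2 (Finset.mem_coe.2 hv1C2) (Finset.mem_coe.2 hdC2) (Ne.symm hdv1)
    exact hd.2 (mem_cnb.2 (Or.inr this))
  have hnadj : ¬ G.Adj v1 v2 := by
    intro hadj
    obtain ⟨d, hd⟩ := hD1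
    have hdv2 : d ≠ v2 := by
      intro he
      rw [mem_sdiff] at hd
      exact hd.2 (he ▸ mem_cnb.2 (Or.inr hadj))
    exact step d hd hdv2
  apply Finset.Subset.antisymm
  · intro d hd
    rw [mem_singleton]
    by_contra hdv2
    exact step d hd hdv2
  · intro d hd
    rw [mem_singleton] at hd
    subst hd
    rw [mem_sdiff, mem_cnb]
    refine ⟨hv2C1, ?_⟩
    push_neg
    exact ⟨hne.symm, hnadj⟩

lemma star (G : SimpleGraph V) :
    ∑ v, Acount G v ≤ ∑ v : V, (2 ^ (cnb G v).card - 1) := by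
  have h1 : ∑ v, Acount G v = ((univ : Finset V).sigma fun v =>
      univ.filter fun C : Finset V => G.IsClique (C : Set V) ∧ (C ∩ cnb G v).Nonempty).card := by
    unfold Acount
    rw [card_sigma]
  have h2 : ∑ v : V, (2 ^ (cnb G v).card - 1) = ((univ : Finset V).sigma fun w =>
      (cnb G w).powerset.erase ∅).card := by
    rw [card_sigma]
    apply Finset.sum_congr rfl
    intro w _
    rw [card_erase_of_mem (mem_powerset.2 (empty_subset _)), card_powerset]
  rw [h1, h2]
  set ordv : V → ℕ := fun v => ((Fintype.equivFin V) v : ℕ) with hordv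
  have ordinj : Function.Injective ordv := by
    intro x y h
    exact (Fintype.equivFin V).injective (Fin.ext h)
  set F : (Σ _ : V, Finset V) → (Σ _ : V, Finset V) := fun p =>
    if hD : (p.2 \ cnb G p.1).Nonempty then
      if hS : (p.2 ∩ cnb G p.1).Nonempty then
        if (∃ u, p.2 \ cnb G p.1 = {u} ∧ ordv u < ordv p.1) then
          ⟨hS.choose, (insert p.1 p.2).erase hS.choose⟩
        else ⟨hS.choose, insert p.1 p.2⟩
      else p
    else p
    with hF
  have not_clique_of : ∀ {v d : V} {A : Finset V}, v ∈ A → d ∈ A → d ≠ v → ¬ G.Adj v d →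
      ¬ G.IsClique (A : Set V) := by
    intro v d A hv hd hne hnadj h
    exact hnadj (h (Finset.mem_coe.2 hv) (Finset.mem_coe.2 hd) hne.symm)
  apply Finset.card_le_card_of_injOn F
  · -- maps to
    rintro ⟨v, C⟩ hp
    rw [mem_coe, mem_sigma, mem_filter] at hp
    obtain ⟨-, -, hcl, hS⟩ := hp
    dsimp only at hcl hS
    rw [mem_coe, mem_sigma]
    refine ⟨mem_univ _, ?_⟩
    rw [hF]
    dsimp only
    by_cases hD : (C \ cnb G v).Nonempty
    · have hvC : v ∉ C := not_mem_of_sdiff hcl hD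
      rw [dif_pos hD, dif_pos hS]
      have hw0CS := hS.choose_spec
      set w0 := hS.choose with hw0def
      rw [mem_inter] at hw0CS
      obtain ⟨hw0C, hw0cnb⟩ := hw0CS
      have hw0v : w0 ≠ v := fun h => hvC (h ▸ hw0C)
      have hadj : G.Adj v w0 := (mem_cnb.1 hw0cnb).resolve_left hw0v
      have hsub : insert v C ⊆ cnb G w0 :=
        insert_subset (mem_cnb.2 (Or.inr hadj.symm)) (clique_subset_cnb hcl hw0C)
      by_cases hre : ∃ u, C \ cnb G v = {u} ∧ ordv u < ordv v
      · rw [if_pos hre]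
        dsimp only
        rw [mem_erase, mem_powerset]
        have hv' : v ∈ (insert v C).erase w0 :=
          mem_erase.2 ⟨Ne.symm hw0v, mem_insert_self v C⟩
        exact ⟨fun h => by rw [h] at hv'; exact absurd hv' (notMem_empty v),
          (erase_subset _ _).trans hsub⟩
      · rw [if_neg hre]
        dsimp only
        rw [mem_erase, mem_powerset]
        exact ⟨insert_ne_empty v C, hsub⟩
    · rw [dif_neg hD]
      dsimp only
      rw [mem_erase, mem_powerset]
      have hCne : C.Nonempty := hS.mono inter_subset_left
      have hCsub : C ⊆ cnb G v := by
        rw [← sdiff_eq_empty_iff_subset]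
        exact not_nonempty_iff_eq_empty.1 hD
      exact ⟨Finset.nonempty_iff_ne_empty.1 hCne, hCsub⟩
  · -- injective
    rintro ⟨v1, C1⟩ hp1 ⟨v2, C2⟩ hp2 heq
    simp only [coe_sigma, Set.mem_sigma_iff, mem_coe, mem_filter, mem_univ, true_and] at hp1 hp2
    obtain ⟨hcl1, hS1⟩ := hp1
    obtain ⟨hcl2, hS2⟩ := hp2

    rw [hF] at heq
    dsimp only at heq
    by_cases hD1 : (C1 \ cnb G v1).Nonempty <;> by_cases hD2 : (C2 \ cnb G v2).Nonempty
    · -- both type ii/iii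
      rw [dif_pos hD1, dif_pos hS1, dif_pos hD2, dif_pos hS2] at heq
      have hvC1 : v1 ∉ C1 := not_mem_of_sdiff hcl1 hD1
      have hvC2 : v2 ∉ C2 := not_mem_of_sdiff hcl2 hD2
      have hw1CS := hS1.choose_spec
      have hw2CS := hS2.choose_spec
      set w1 := hS1.choose with hw1def
      set w2 := hS2.choose with hw2def
      rw [mem_inter] at hw1CS hw2CS
      by_cases hre1 : ∃ u, C1 \ cnb G v1 = {u} ∧ ordv u < ordv v1 <;>
        by_cases hre2 : ∃ u, C2 \ cnb G v2 = {u} ∧ ordv u < ordv v2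
      · -- both reroute
        rw [if_pos hre1, if_pos hre2] at heq
        obtain ⟨hfst, hsnd'⟩ := Sigma.mk.inj_iff.1 heq
        have hsnd := eq_of_heq hsnd'
        rw [hfst] at hsnd
        have hM : insert v1 C1 = insert v2 C2 := by
          have e1 : insert w2 ((insert v1 C1).erase w2) = insert v1 C1 :=
            insert_erase (by rw [← hfst]; exact mem_insert_of_mem hw1CS.1)
          have e2 : insert w2 ((insert v2 C2).erase w2) = insert v2 C2 :=
            insert_erase (mem_insert_of_mem hw2CS.1)
          rw [← e1, ← e2, hsnd]
        rcases eq_or_ne v1 v2 with hv | hv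
        · subst hv
          have hC : C1 = C2 := by
            have e1 : (insert v1 C1).erase v1 = C1 := erase_insert hvC1
            have e2 : (insert v1 C2).erase v1 = C2 := erase_insert hvC2
            rw [← e1, ← e2, hM]
          rw [hC]
        · exfalso
          have hd1 : C1 \ cnb G v1 = {v2} := key_ne hcl1 hcl2 hvC1 hvC2 hD1 hM hv
          have hd2 : C2 \ cnb G v2 = {v1} := key_ne hcl2 hcl1 hvC2 hvC1 hD2 hM.symm hv.symm
          obtain ⟨u1, hu1, hlt1⟩ := hre1
          obtain ⟨u2, hu2, hlt2⟩ := hre2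
          rw [hd1] at hu1
          rw [hd2] at hu2
          have e1 : u1 = v2 := (Finset.singleton_inj.1 hu1).symm
          have e2 : u2 = v1 := (Finset.singleton_inj.1 hu2).symm
          subst e1; subst e2
          exact absurd hlt2 (not_lt.2 hlt1.le)
      · -- reroute vs not
        exfalso
        rw [if_pos hre1, if_neg hre2] at heq
        obtain ⟨hfst, hsnd'⟩ := Sigma.mk.inj_iff.1 heq
        have hsnd := eq_of_heq hsnd'
        have hw : w1 ∉ (insert v1 C1).erase w1 := notMem_erase _ _
        rw [hsnd, hfst] at hw
        exact hw (mem_insert_of_mem hw2CS.1)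
      · exfalso
        rw [if_neg hre1, if_pos hre2] at heq
        obtain ⟨hfst, hsnd'⟩ := Sigma.mk.inj_iff.1 heq
        have hsnd := eq_of_heq hsnd'
        have hw : w2 ∉ (insert v2 C2).erase w2 := notMem_erase _ _
        rw [← hsnd, ← hfst] at hw
        exact hw (mem_insert_of_mem hw1CS.1)
      · -- both plain
        rw [if_neg hre1, if_neg hre2] at heq
        obtain ⟨hfst, hsnd'⟩ := Sigma.mk.inj_iff.1 heq
        have hM := eq_of_heq hsnd'
        rcases eq_or_ne v1 v2 with hv | hv
        · subst hv
          have hC : C1 = C2 := by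
            have e1 : (insert v1 C1).erase v1 = C1 := erase_insert hvC1
            have e2 : (insert v1 C2).erase v1 = C2 := erase_insert hvC2
            rw [← e1, ← e2, hM]
          rw [hC]
        · exfalso
          have hd1 : C1 \ cnb G v1 = {v2} := key_ne hcl1 hcl2 hvC1 hvC2 hD1 hM hv
          have hd2 : C2 \ cnb G v2 = {v1} := key_ne hcl2 hcl1 hvC2 hvC1 hD2 hM.symm hv.symm
          rw [not_exists] at hre1 hre2
          have h1' := hre1 v2
          have h2' := hre2 v1
          rw [hd1] at h1'
          rw [hd2] at h2'
          push_neg at h1' h2'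
          exact hv (ordinj (le_antisymm (h1' rfl) (h2' rfl)))
    · -- type ii/iii vs type i
      exfalso
      rw [dif_pos hD1, dif_pos hS1, dif_neg hD2] at heq
      have hvC1 : v1 ∉ C1 := not_mem_of_sdiff hcl1 hD1
      have hw1CS := hS1.choose_spec
      set w1 := hS1.choose with hw1def
      rw [mem_inter] at hw1CS
      obtain ⟨d, hd⟩ := hD1
      rw [mem_sdiff] at hd
      have hdv : d ≠ v1 := fun h => hvC1 (h ▸ hd.1)
      have hdnadj : ¬ G.Adj v1 d := fun h => hd.2 (mem_cnb.2 (Or.inr h))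
      have hdw1 : d ≠ w1 := fun h => hd.2 (h ▸ hw1CS.2)
      have hvw1 : v1 ≠ w1 := fun h => hvC1 (h ▸ hw1CS.1)
      have hnc : ¬ G.IsClique (C2 : Set V) := by
        by_cases hre1 : ∃ u, C1 \ cnb G v1 = {u} ∧ ordv u < ordv v1
        · rw [if_pos hre1] at heq
          obtain ⟨hfst, hsnd'⟩ := Sigma.mk.inj_iff.1 heq
          have hsnd := (eq_of_heq hsnd').symm
          rw [hsnd]
          exact not_clique_of (mem_erase.2 ⟨hvw1, mem_insert_self v1 C1⟩)
            (mem_erase.2 ⟨hdw1, mem_insert_of_mem hd.1⟩) hdv hdnadj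
        · rw [if_neg hre1] at heq
          obtain ⟨hfst, hsnd'⟩ := Sigma.mk.inj_iff.1 heq
          have hsnd := (eq_of_heq hsnd').symm
          rw [hsnd]
          exact not_clique_of (mem_insert_self v1 C1) (mem_insert_of_mem hd.1) hdv hdnadj
      exact hnc hcl2
    · -- type i vs type ii/iii
      exfalso
      rw [dif_neg hD1, dif_pos hD2, dif_pos hS2] at heq
      have hvC2 : v2 ∉ C2 := not_mem_of_sdiff hcl2 hD2
      have hw2CS := hS2.choose_spec
      set w2 := hS2.choose with hw2def
      rw [mem_inter] at hw2CS
      obtain ⟨d, hd⟩ := hD2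
      rw [mem_sdiff] at hd
      have hdv : d ≠ v2 := fun h => hvC2 (h ▸ hd.1)
      have hdnadj : ¬ G.Adj v2 d := fun h => hd.2 (mem_cnb.2 (Or.inr h))
      have hdw2 : d ≠ w2 := fun h => hd.2 (h ▸ hw2CS.2)
      have hvw2 : v2 ≠ w2 := fun h => hvC2 (h ▸ hw2CS.1)
      have hnc : ¬ G.IsClique (C1 : Set V) := by
        by_cases hre2 : ∃ u, C2 \ cnb G v2 = {u} ∧ ordv u < ordv v2
        · rw [if_pos hre2] at heq
          obtain ⟨hfst, hsnd'⟩ := Sigma.mk.inj_iff.1 heq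
          have hsnd := eq_of_heq hsnd'
          rw [hsnd]
          exact not_clique_of (mem_erase.2 ⟨hvw2, mem_insert_self v2 C2⟩)
            (mem_erase.2 ⟨hdw2, mem_insert_of_mem hd.1⟩) hdv hdnadj
        · rw [if_neg hre2] at heq
          obtain ⟨hfst, hsnd'⟩ := Sigma.mk.inj_iff.1 heq
          have hsnd := eq_of_heq hsnd'
          rw [hsnd]
          exact not_clique_of (mem_insert_self v2 C2) (mem_insert_of_mem hd.1) hdv hdnadj
      exact hnc hcl1
    · -- both type i
      rw [dif_neg hD1, dif_neg hD2] at heq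
      exact heq

lemma split_count (G : SimpleGraph V) (v : V) :
    cliqueCount G = Acount G v +
      (univ.filter fun C : Finset V => G.IsClique (C : Set V) ∧ (C ∩ cnb G v) = ∅).card := by
  unfold cliqueCount Acount
  rw [← Finset.card_filter_add_card_filter_not
    (p := fun C : Finset V => (C ∩ cnb G v).Nonempty), filter_filter, filter_filter]
  congr 2
  ext C
  simp [not_nonempty_iff_eq_empty]

lemma avoid_le (G : SimpleGraph V) (v : V) :
    (univ.filter fun C : Finset V => G.IsClique (C : Set V) ∧ (C ∩ cnb G v) = ∅).card ≤
      cliqueCount (G.comap (Subtype.val : {x : V // x ∈ univ \ cnb G v} → V)) := by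
  unfold cliqueCount
  apply Finset.card_le_card_of_injOn
    (fun C => C.subtype (fun x => x ∈ univ \ cnb G v))
  · intro C hC
    rw [mem_coe, mem_filter] at hC
    obtain ⟨-, hcl, hemp⟩ := hC
    simp only [Finset.mem_coe, Finset.mem_filter, Finset.mem_univ, true_and]
    intro a ha b hb hne
    rw [Finset.mem_coe, Finset.mem_subtype] at ha hb
    exact hcl (Finset.mem_coe.2 ha) (Finset.mem_coe.2 hb) (fun h => hne (Subtype.ext h))
  · intro C1 h1 C2 h2 heq
    dsimp only at heq
    rw [mem_coe, mem_filter] at h1 h2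
    have hsub : ∀ (C : Finset V), G.IsClique (C : Set V) → (C ∩ cnb G v) = ∅ →
        C.filter (fun x => x ∈ univ \ cnb G v) = C := by
      intro C _ hemp
      apply Finset.filter_true_of_mem
      intro x hx
      rw [mem_sdiff]
      refine ⟨mem_univ _, fun hc => ?_⟩
      have : x ∈ C ∩ cnb G v := mem_inter.2 ⟨hx, hc⟩
      rw [hemp] at this
      exact absurd this (notMem_empty x)
    have e1 := Finset.subtype_map (s := C1) (p := fun x => x ∈ univ \ cnb G v)
    have e2 := Finset.subtype_map (s := C2) (p := fun x => x ∈ univ \ cnb G v)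
    rw [hsub C1 h1.2.1 h1.2.2] at e1
    rw [hsub C2 h2.2.1 h2.2.2] at e2
    rw [← e1, ← e2, heq]

lemma cnb_comap_le (G : SimpleGraph V) (U : Finset V) [Fintype {x : V // x ∈ U}]
    (x : {x : V // x ∈ U}) :
    (cnb (G.comap (Subtype.val : {x : V // x ∈ U} → V)) x).card ≤ (cnb G x.val).card := by
  apply Finset.card_le_card_of_injOn Subtype.val
  · intro y hy
    rw [mem_coe, mem_cnb] at hy
    rw [mem_coe, mem_cnb]
    rcases hy with rfl | hy
    · exact Or.inl rfl
    · exact Or.inr hy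
  · intro y1 _ y2 _ h
    exact Subtype.ext h

lemma main_ind (r : ℕ) : ∀ (n : ℕ) (V : Type*) [Fintype V] (G : SimpleGraph V),
    (∀ v, (cnb G v).card ≤ r + 1) → Fintype.card V = n → cliqueCount G ≤ fb r n := by
  intro n
  induction n using Nat.strong_induction_on with
  | _ n ih =>
    intro V _ G hdeg hcard
    rcases Nat.eq_zero_or_pos n with rfl | hn
    · have : IsEmpty V := Fintype.card_eq_zero_iff.1 hcard
      have h1 : cliqueCount G ≤ ({∅} : Finset (Finset V)).card := by
        apply Finset.card_le_card
        intro s _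
        rw [mem_singleton]
        exact Finset.eq_empty_of_forall_notMem (fun x _ => isEmptyElim x)
      simp only [card_singleton] at h1
      have h2 : fb r 0 = 1 := by simp [fb]
      omega
    · have hne : Nonempty V := Fintype.card_pos_iff.1 (hcard ▸ hn)
      -- pigeonhole using star
      have hex : ∃ v, Acount G v ≤ 2 ^ (cnb G v).card - 1 := by
        by_contra hno
        push_neg at hno
        have : ∑ v : V, (2 ^ (cnb G v).card - 1) < ∑ v, Acount G v :=
          Finset.sum_lt_sum_of_nonempty univ_nonempty (fun i _ => hno i)
        exact absurd (star G) (not_le.2 this)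
      obtain ⟨v, hv⟩ := hex
      set j := (cnb G v).card with hj
      have hj1 : 1 ≤ j := Finset.card_pos.2 ⟨v, self_mem_cnb v⟩
      have hjr : j ≤ r + 1 := hdeg v
      have hjn : j ≤ n := by
        rw [← hcard, ← Finset.card_univ]
        exact Finset.card_le_card (subset_univ _)
      set U := univ \ cnb G v with hU
      have hUcard : U.card = n - j := by
        rw [hU, card_sdiff_of_subset (subset_univ _), card_univ, hcard]
      have hsubcard : Fintype.card {x : V // x ∈ U} = n - j := by
        rw [Fintype.card_of_subtype U (fun x => Iff.rfl), hUcard]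
      have hstep := ih (n - j) (by omega) {x : V // x ∈ U}
        (G.comap (Subtype.val : {x : V // x ∈ U} → V))
        (fun x => le_trans (cnb_comap_le G U x) (hdeg x.val)) hsubcard
      have hsplit := split_count G v
      have havoid := avoid_le G v
      have hdiff := fb_diff r n j hj1 hjr hjn
      have h2j : 1 ≤ 2^j := Nat.one_le_two_pow
      omega

end Aux

section KU
variable (a r b : ℕ)

abbrev VU (a r b : ℕ) := (Fin a × Fin (r + 1)) ⊕ Fin b

lemma kUnion_adj (x y : VU a r b) : (kUnion a r b).Adj x y ↔ x ≠ y ∧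
    ((∃ i p q, x = Sum.inl (i,p) ∧ y = Sum.inl (i,q)) ∨ (∃ u v, x = Sum.inr u ∧ y = Sum.inr v)) := by
  unfold kUnion
  rw [SimpleGraph.fromRel_adj]
  constructor
  · rintro ⟨hne, h⟩
    refine ⟨hne, ?_⟩
    rcases x with ⟨i,p⟩ | u <;> rcases y with ⟨j,q⟩ | v
    · left
      have hij : i = j := by
        rcases h with h | h
        · exact h
        · exact h.symm
      exact ⟨i, p, q, rfl, by rw [hij]⟩
    · exact absurd h (by simp)
    · exact absurd h (by simp)
    · exact Or.inr ⟨u, v, rfl, rfl⟩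
  · rintro ⟨hne, ⟨i,p,q,rfl,rfl⟩ | ⟨u,v,rfl,rfl⟩⟩
    · exact ⟨hne, Or.inl rfl⟩
    · exact ⟨hne, Or.inl trivial⟩

noncomputable def blockL (i : Fin a) : Finset (VU a r b) :=
  (Finset.univ : Finset (Fin (r+1))).map ⟨fun p => Sum.inl (i,p), by intro x y h; simpa using h⟩

noncomputable def blockR : Finset (VU a r b) :=
  (Finset.univ : Finset (Fin b)).map ⟨Sum.inr, by intro x y h; simpa using h⟩

lemma mem_blockL (i : Fin a) (x : VU a r b) : x ∈ blockL a r b i ↔ ∃ p, x = Sum.inl (i, p) := by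
  simp only [blockL, mem_map, mem_univ, true_and, Function.Embedding.coeFn_mk]
  constructor
  · rintro ⟨p, rfl⟩; exact ⟨p, rfl⟩
  · rintro ⟨p, rfl⟩; exact ⟨p, rfl⟩

lemma mem_blockR (x : VU a r b) : x ∈ blockR a r b ↔ ∃ u, x = Sum.inr u := by
  simp only [blockR, mem_map, mem_univ, true_and, Function.Embedding.coeFn_mk]
  constructor
  · rintro ⟨p, rfl⟩; exact ⟨p, rfl⟩
  · rintro ⟨p, rfl⟩; exact ⟨p, rfl⟩

lemma clique_iff (s : Finset (VU a r b)) :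
    (kUnion a r b).IsClique (s : Set (VU a r b)) ↔
      s = ∅ ∨ (∃ i, s ⊆ blockL a r b i) ∨ s ⊆ blockR a r b := by
  constructor
  · intro hcl
    rcases s.eq_empty_or_nonempty with rfl | ⟨x, hx⟩
    · exact Or.inl rfl
    right
    rcases x with ⟨i,p⟩ | u
    · left; refine ⟨i, fun y hy => ?_⟩
      rcases eq_or_ne y (Sum.inl (i,p)) with rfl | hne
      · exact (mem_blockL a r b i _).2 ⟨p, rfl⟩
      · have := hcl (by exact_mod_cast hy) (by exact_mod_cast hx) hne
        rw [kUnion_adj] at this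
        rcases this.2 with ⟨i',p',q',h1,h2⟩ | ⟨u,v,h1,h2⟩
        · obtain ⟨hi, hp⟩ : i = i' ∧ p = q' := by
            simpa [Sum.inl.injEq, Prod.mk.injEq] using h2
          exact (mem_blockL a r b i _).2 ⟨p', by rw [h1, hi]⟩
        · simp at h2
    · right; intro y hy
      rcases eq_or_ne y (Sum.inr u) with rfl | hne
      · exact (mem_blockR a r b _).2 ⟨u, rfl⟩
      · have := hcl (by exact_mod_cast hy) (by exact_mod_cast hx) hne
        rw [kUnion_adj] at this
        rcases this.2 with ⟨i',p',q',rfl,h2⟩ | ⟨u',v,h1,h2⟩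
        · simp at h2
        · exact (mem_blockR a r b _).2 ⟨u', h1⟩
  · rintro (rfl | ⟨i, hs⟩ | hs)
    · simp
    · intro x hx y hy hne
      rw [kUnion_adj]
      refine ⟨hne, Or.inl ?_⟩
      have hx' := (mem_blockL a r b i x).1 (hs hx)
      have hy' := (mem_blockL a r b i y).1 (hs hy)
      obtain ⟨p, rfl⟩ := hx'; obtain ⟨q, rfl⟩ := hy'
      exact ⟨i, p, q, rfl, rfl⟩
    · intro x hx y hy hne
      rw [kUnion_adj]
      refine ⟨hne, Or.inr ?_⟩
      obtain ⟨u, rfl⟩ := (mem_blockR a r b x).1 (hs hx)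
      obtain ⟨v, rfl⟩ := (mem_blockR a r b y).1 (hs hy)
      exact ⟨u, v, rfl, rfl⟩

lemma cliqueCount_kUnion : cliqueCount (kUnion a r b) = a * (2^(r+1) - 1) + 2^b := by
  classical
  have hmain : cliqueCount (kUnion a r b) =
      (insert (∅ : Finset (VU a r b))
        (((Finset.univ : Finset (Fin a)).biUnion fun i => (blockL a r b i).powerset.erase ∅) ∪
          (blockR a r b).powerset.erase ∅)).card := by
    rw [cliqueCount]
    congr 1
    ext s
    simp only [mem_filter, mem_univ, true_and, mem_insert, mem_union, mem_biUnion, mem_erase,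
      mem_powerset, clique_iff]
    constructor
    · rintro (rfl | ⟨i, hs⟩ | hs)
      · exact Or.inl rfl
      · rcases eq_or_ne s ∅ with rfl | hne
        · exact Or.inl rfl
        · exact Or.inr (Or.inl ⟨i, hne, hs⟩)
      · rcases eq_or_ne s ∅ with rfl | hne
        · exact Or.inl rfl
        · exact Or.inr (Or.inr ⟨hne, hs⟩)
    · rintro (rfl | ⟨i, _, hs⟩ | ⟨_, hs⟩)
      · exact Or.inl rfl
      · exact Or.inr (Or.inl ⟨i, hs⟩)
      · exact Or.inr (Or.inr hs)
  rw [hmain]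
  have hL : ∀ i, (blockL a r b i).card = r + 1 := by intro i; simp [blockL]
  have hR : (blockR a r b).card = b := by simp [blockR]
  have hdisjLR : Disjoint ((Finset.univ : Finset (Fin a)).biUnion fun i => (blockL a r b i).powerset.erase ∅)
      ((blockR a r b).powerset.erase ∅) := by
    rw [disjoint_left]
    intro s hs hs'
    simp only [mem_biUnion, mem_erase, mem_powerset] at hs hs'
    obtain ⟨i, _, hne, hsub⟩ := hs
    obtain ⟨x, hx⟩ := Finset.nonempty_iff_ne_empty.2 hne
    obtain ⟨p, rfl⟩ := (mem_blockL a r b i x).1 (hsub hx)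
    obtain ⟨u, hu⟩ := (mem_blockR a r b _).1 (hs'.2 hx)
    exact absurd hu (by simp)
  have hpair : ∀ i ∈ (Finset.univ : Finset (Fin a)), ∀ j ∈ (Finset.univ : Finset (Fin a)), i ≠ j →
      Disjoint ((blockL a r b i).powerset.erase ∅) ((blockL a r b j).powerset.erase ∅) := by
    intro i _ j _ hij
    rw [disjoint_left]
    intro s hs hs'
    simp only [mem_erase, mem_powerset] at hs hs'
    obtain ⟨x, hx⟩ := Finset.nonempty_iff_ne_empty.2 hs.1
    obtain ⟨p, rfl⟩ := (mem_blockL a r b i x).1 (hs.2 hx)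
    obtain ⟨q, hq⟩ := (mem_blockL a r b j _).1 (hs'.2 hx)
    obtain ⟨hij', hpq⟩ : i = j ∧ p = q := by
      simpa [Sum.inl.injEq, Prod.mk.injEq] using hq
    exact hij hij'
  have hempty : (∅ : Finset (VU a r b)) ∉
      (((Finset.univ : Finset (Fin a)).biUnion fun i => (blockL a r b i).powerset.erase ∅) ∪
        (blockR a r b).powerset.erase ∅) := by
    simp
  rw [card_insert_of_notMem hempty, card_union_of_disjoint hdisjLR, card_biUnion hpair]
  have hc1 : ∀ i : Fin a, ((blockL a r b i).powerset.erase ∅).card = 2^(r+1) - 1 := by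
    intro i
    rw [card_erase_of_mem (by simp), card_powerset, hL]
  have hc2 : ((blockR a r b).powerset.erase ∅).card = 2^b - 1 := by
    rw [card_erase_of_mem (by simp), card_powerset, hR]
  simp only [hc1, hc2, sum_const, card_univ, Fintype.card_fin, smul_eq_mul]
  have : 1 ≤ (2:ℕ)^b := Nat.one_le_two_pow
  omega

end KU

lemma Aux.cnb_card_eq {V : Type*} [Fintype V] (G : SimpleGraph V) [DecidableRel G.Adj] (v : V) :
    (Aux.cnb G v).card = G.degree v + 1 := by
  have h : Aux.cnb G v = insert v (G.neighborFinset v) := by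
    ext x
    rw [Aux.mem_cnb, Finset.mem_insert, SimpleGraph.mem_neighborFinset]
  rw [h, Finset.card_insert_of_notMem
    (fun hc => G.irrefl ((SimpleGraph.mem_neighborFinset G v v).1 hc))]
  rfl

/-- **Main Theorem (inequality).** If `n = a(r+1) + b` with `0 ≤ b ≤ r`, `r ≥ 1`, and `G` is a
graph on `n` vertices with `Δ(G) ≤ r`, then `k(G) ≤ k(aK_{r+1} ∪ K_b) = a(2^{r+1} - 1) + 2^b`. -/
theorem stmt0 {V : Type*} [Fintype V] (n r a b : ℕ) (hr : 1 ≤ r) (hb : b ≤ r)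
    (hn : n = a * (r + 1) + b) (G : SimpleGraph V) (hcard : Fintype.card V = n)
    (hdeg : G.maxDegree ≤ r) :
    cliqueCount G ≤ cliqueCount (kUnion a r b) ∧
      cliqueCount (kUnion a r b) = a * (2 ^ (r + 1) - 1) + 2 ^ b := by
  have hku := cliqueCount_kUnion a r b
  refine ⟨?_, hku⟩
  rw [hku]
  have hdeg' : ∀ v, (Aux.cnb G v).card ≤ r + 1 := by
    intro v
    rw [Aux.cnb_card_eq G v]
    have h1 : G.degree v ≤ G.maxDegree := G.degree_le_maxDegree v
    omega
  have hmain := Aux.main_ind r n V G hdeg' hcard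
  rwa [hn, fb_val r a b hb] at hmain
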